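/- arXiv:math/0409107 — 7 statements merged into one kernel-verified Lean document; each statement's English description precedes it below -/
import Mathlib

section
/- Let p be a prime and 1 ≤ k < p. For all t ∈ F_p, the sum b_{k,0}(t) = Σ_{α ∈ S_{k-1,t}} t·π(α) equals (-1)^{k+1} t^k, where S_{k-1,t} is the set of (k-1)-element subsets of F_p not containing t and π(α) is the product of the elements of α. -/
open Finset

/-- `π(α)`: the product of the elements of a finite subset of `ZMod p`. -/
def piProd {p : ℕ} (α : Finset (ZMod p)) : ZMod p := ∏ x ∈ α, x

/-- `σ_j(α)`: the j-th elementary symmetric polynomial evaluated at the elements of `α`. -/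
def esym {p : ℕ} (j : ℕ) (α : Finset (ZMod p)) : ZMod p :=
  ∑ β ∈ α.powersetCard j, ∏ x ∈ β, x

/-- `b_{k,j}(t) = Σ_{α ∈ S_{k-1,t}} t·π(α)·σ_j(α ∪ {t})`, where `S_{k-1,t}` is the set of
(k-1)-element subsets of `F_p` not containing `t`. -/
def bkj (p : ℕ) [NeZero p] (k j : ℕ) (t : ZMod p) : ZMod p :=
  ∑ α ∈ (Finset.univ.erase t).powersetCard (k - 1),
    t * piProd α * esym j (insert t α)

/-- `d_{k,j} = Σ_{α ∈ S_k} π(α)·σ_j(α)`, summing over all k-element subsets of `F_p`. -/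
def dkj (p : ℕ) [NeZero p] (k j : ℕ) : ZMod p :=
  ∑ α ∈ (Finset.univ : Finset (ZMod p)).powersetCard k, piProd α * esym j α

open Polynomial in
/-- The elementary symmetric sum over all of `F_p` vanishes in degrees `1 ≤ j ≤ p - 2`. -/
lemma esymm_univ_zero (p : ℕ) [Fact p.Prime] (j : ℕ) (hj1 : 1 ≤ j) (hj2 : j ≤ p - 2) :
    ∑ α ∈ (Finset.univ : Finset (ZMod p)).powersetCard j, ∏ x ∈ α, x = 0 := by
  have hp : 1 < p := (Fact.out : p.Prime).one_lt
  have hcard : Fintype.card (ZMod p) = p := ZMod.card p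
  set f : (ZMod p)[X] := X ^ p - X with hf
  have hroots : f.roots = Finset.univ.val := by
    have := FiniteField.roots_X_pow_card_sub_X (ZMod p)
    rwa [hcard] at this
  have hdeg : f.natDegree = p := FiniteField.X_pow_card_sub_X_natDegree_eq _ hp
  have hcardroots : Multiset.card f.roots = f.natDegree := by
    rw [hroots, hdeg]; simp [hcard]
  have hlead : f.leadingCoeff = 1 := by
    rw [Polynomial.leadingCoeff, hdeg, hf, coeff_sub, coeff_X_pow, coeff_X]
    have h2 : ¬ (1 = p) := by omega
    simp [h2]
  have hcoeff := Polynomial.coeff_eq_esymm_roots_of_card hcardroots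
    (k := p - j) (by omega)
  rw [hdeg, hlead, hroots] at hcoeff
  have hpj : p - (p - j) = j := by omega
  rw [hpj] at hcoeff
  have hzero : f.coeff (p - j) = 0 := by
    rw [hf, coeff_sub, coeff_X_pow, coeff_X]
    have h1 : ¬ (p - j = p) := by omega
    have h2 : ¬ (1 = p - j) := by omega
    simp [h1, h2]
  rw [hzero] at hcoeff
  have hesymm : (Finset.univ.val : Multiset (ZMod p)).esymm j
      = ∑ α ∈ (Finset.univ : Finset (ZMod p)).powersetCard j, ∏ x ∈ α, x := by
    have := Finset.esymm_map_val (id : ZMod p → ZMod p) Finset.univ j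
    simp only [Multiset.map_id] at this
    rw [this]; rfl
  rw [hesymm] at hcoeff
  have hne : ((-1 : ZMod p) ^ j) ≠ 0 :=
    pow_ne_zero _ (neg_ne_zero.mpr one_ne_zero)
  have := hcoeff.symm
  rw [one_mul] at this
  rcases mul_eq_zero.mp (by rw [← this]) with h | h
  · exact absurd h hne
  · exact h

/-- Recurrence for the symmetric sums over `F_p \ {t}`. -/
lemma erase_sum_eq (p : ℕ) [Fact p.Prime] (t : ZMod p) (j : ℕ)
    (hg : ∑ α ∈ (Finset.univ : Finset (ZMod p)).powersetCard (j+1), piProd α = 0) :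
    ∑ α ∈ (Finset.univ.erase t).powersetCard (j+1), piProd α
      = - t * ∑ α ∈ (Finset.univ.erase t).powersetCard j, piProd α := by
  have huniv : (Finset.univ : Finset (ZMod p)) = insert t (Finset.univ.erase t) := by
    rw [Finset.insert_erase (Finset.mem_univ t)]
  have hnm : t ∉ Finset.univ.erase t := Finset.notMem_erase t _
  rw [huniv, Finset.powersetCard_succ_insert hnm] at hg
  have hdisj : Disjoint ((Finset.univ.erase t).powersetCard (j+1))
      (((Finset.univ.erase t).powersetCard j).image (insert t)) := by
    rw [Finset.disjoint_right]
    intro α hα hα'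
    obtain ⟨β, hβ, rfl⟩ := Finset.mem_image.mp hα
    have := (Finset.mem_powersetCard.mp hα').1
    exact hnm (this (Finset.mem_insert_self t β))
  rw [Finset.sum_union hdisj] at hg
  have himg : ∑ α ∈ ((Finset.univ.erase t).powersetCard j).image (insert t), piProd α
      = t * ∑ α ∈ (Finset.univ.erase t).powersetCard j, piProd α := by
    rw [Finset.sum_image, Finset.mul_sum]
    · apply Finset.sum_congr rfl
      intro β hβ
      have hβt : t ∉ β := fun h =>
        hnm ((Finset.mem_powersetCard.mp hβ).1 h)
      rw [piProd, piProd, Finset.prod_insert hβt]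
    · intro β₁ h₁ β₂ h₂ he
      have h₁t : t ∉ β₁ := fun h => hnm ((Finset.mem_powersetCard.mp h₁).1 h)
      have h₂t : t ∉ β₂ := fun h => hnm ((Finset.mem_powersetCard.mp h₂).1 h)
      rw [← Finset.erase_insert h₁t, ← Finset.erase_insert h₂t, he]
  rw [himg] at hg
  linear_combination hg

/-- Symmetric sums over `F_p \ {t}`: `e_j(F_p \ {t}) = (-t)^j` for `j ≤ p - 2`. -/
lemma erase_sum_pow (p : ℕ) [Fact p.Prime] (t : ZMod p) (j : ℕ) (hj : j ≤ p - 2) :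
    ∑ α ∈ (Finset.univ.erase t).powersetCard j, piProd α = (-t) ^ j := by
  induction j with
  | zero => simp [piProd]
  | succ n ih =>
    have hg : ∑ α ∈ (Finset.univ : Finset (ZMod p)).powersetCard (n+1), piProd α = 0 := by
      simpa [piProd] using esymm_univ_zero p (n+1) (by omega) (by omega)
    rw [erase_sum_eq p t n hg, ih (by omega), pow_succ]
    ring

/-- Lemma 2.4 (first part): for 1 <= k < p, b_{k,0}(t) = (-1)^(k+1) * t^k for all t in F_p. -/
theorem bkj_zero_eq (p : ℕ) [Fact p.Prime] (k : ℕ) (hk : 1 ≤ k) (hkp : k < p) (t : ZMod p) :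
    bkj p k 0 t = (-1 : ZMod p) ^ (k + 1) * t ^ k := by
  obtain ⟨m, rfl⟩ : ∃ m, k = m + 1 := ⟨k - 1, by omega⟩
  have hesym0 : ∀ α : Finset (ZMod p), esym 0 α = 1 := by
    intro α; simp [esym]
  have hsum : bkj p (m+1) 0 t
      = t * ∑ α ∈ (Finset.univ.erase t).powersetCard m, piProd α := by
    rw [bkj, Finset.mul_sum]
    apply Finset.sum_congr (by norm_num)
    intro α _
    rw [hesym0, mul_one]
  rw [hsum, erase_sum_pow p t m (by omega), neg_pow]
  ring
end

section
/- Let p be a prime and suppose 0 ≤ j ≤ k with 1 ≤ k+j < p. Then for all t ∈ F_p, b_{k,j}(t) = Σ_{α ∈ S_{k-1,t}} t·π(α)·σ_j(α ∪ {t}) equals (-1)^{k+1}·C(k,j)·t^{k+j}, where C(k,j) is the binomial coefficient taken modulo p. -/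
open Finset

/-- Auxiliary: the `d`-sum restricted to subsets of an arbitrary set `S`. -/
def Dl {p : ℕ} (S : Finset (ZMod p)) (m i : ℕ) : ZMod p :=
  ∑ α ∈ S.powersetCard m, piProd α * esym i α

section Aux

variable {p : ℕ}

lemma sum_pcs_insert {t : ZMod p} {S : Finset (ZMod p)} (h : t ∉ S) (n : ℕ)
    (f : Finset (ZMod p) → ZMod p) :
    ∑ α ∈ (insert t S).powersetCard (n + 1), f α
      = ∑ α ∈ S.powersetCard (n + 1), f α + ∑ α ∈ S.powersetCard n, f (insert t α) := by
  rw [powersetCard_succ_insert h n, sum_union, sum_image]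
  · intro β1 h1 β2 h2 hins
    rw [mem_coe, mem_powersetCard] at h1 h2
    have t1 : t ∉ β1 := fun ht => h (h1.1 ht)
    have t2 : t ∉ β2 := fun ht => h (h2.1 ht)
    rw [← erase_insert t1, ← erase_insert t2, hins]
  · rw [disjoint_left]
    intro β hβ hβ'
    rw [mem_powersetCard] at hβ
    rcases mem_image.1 hβ' with ⟨γ, _, rfl⟩
    exact h (hβ.1 (mem_insert_self t γ))

lemma esym_zero (α : Finset (ZMod p)) : esym 0 α = 1 := by simp [esym]

lemma esym_insert {t : ZMod p} {α : Finset (ZMod p)} (h : t ∉ α) (i : ℕ) :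
    esym (i + 1) (insert t α) = esym (i + 1) α + t * esym i α := by
  unfold esym
  rw [sum_pcs_insert h i (fun β => ∏ x ∈ β, x), mul_sum]
  congr 1
  refine sum_congr rfl fun β hβ => ?_
  rw [mem_powersetCard] at hβ
  rw [prod_insert (fun ht => h (hβ.1 ht))]

lemma piProd_insert {t : ZMod p} {α : Finset (ZMod p)} (h : t ∉ α) :
    piProd (insert t α) = t * piProd α := prod_insert h

variable [Fact p.Prime]

lemma exists_pow_ne_one (n : ℕ) (h1 : 1 ≤ n) (h2 : n ≤ p - 2) :
    ∃ c : ZMod p, c ≠ 0 ∧ c ^ n ≠ 1 := by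
  obtain ⟨g, hg⟩ := IsCyclic.exists_generator (α := (ZMod p)ˣ)
  have hord : orderOf g = p - 1 := by
    rw [orderOf_eq_card_of_forall_mem_zpowers hg, Nat.card_eq_fintype_card, ZMod.card_units]
  refine ⟨(g : ZMod p), Units.ne_zero g, fun hpow => ?_⟩
  have hg1 : g ^ n = 1 := Units.ext (by push_cast; simpa using hpow)
  have hdvd : p - 1 ∣ n := hord ▸ orderOf_dvd_of_pow_eq_one hg1
  have hp2 : 2 ≤ p := (Fact.out : p.Prime).two_le
  have := Nat.le_of_dvd (by omega) hdvd
  omega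

lemma Dl_scale (c : ZMod p) (hc : c ≠ 0) (m i : ℕ) :
    Dl (univ : Finset (ZMod p)) m i = c ^ (m + i) * Dl univ m i := by
  classical
  set e : ZMod p ≃ ZMod p := Equiv.mulLeft₀ c hc with he
  have happ : ∀ x : ZMod p, e x = c * x := fun x => rfl
  have hprod : ∀ (α : Finset (ZMod p)),
      ∏ x ∈ α.map e.toEmbedding, x = c ^ α.card * ∏ x ∈ α, x := by
    intro α
    rw [prod_map]
    simp only [Equiv.coe_toEmbedding, happ]
    rw [prod_mul_distrib, prod_const]
  have hmap : ∀ (α : Finset (ZMod p)), piProd (α.map e.toEmbedding) = c ^ α.card * piProd α :=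
    fun α => hprod α
  have hesym : ∀ (α : Finset (ZMod p)) (i : ℕ),
      esym i (α.map e.toEmbedding) = c ^ i * esym i α := by
    intro α i
    rw [esym, esym, powersetCard_map, sum_map, mul_sum]
    refine sum_congr rfl fun β hβ => ?_
    rw [mem_powersetCard] at hβ
    rw [RelEmbedding.coe_toEmbedding, mapEmbedding_apply, hprod, hβ.2]
  conv_lhs => rw [Dl, ← map_univ_equiv e]
  rw [powersetCard_map, sum_map, Dl, mul_sum]
  refine sum_congr rfl fun α hα => ?_
  rw [mem_powersetCard] at hα
  rw [RelEmbedding.coe_toEmbedding, mapEmbedding_apply, hmap, hesym, hα.2, pow_add]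
  ring

lemma Dl_univ_zero (m i : ℕ) (h1 : 1 ≤ m + i) (h2 : m + i ≤ p - 2) :
    Dl (univ : Finset (ZMod p)) m i = 0 := by
  obtain ⟨c, hc, hcn⟩ := exists_pow_ne_one (m + i) h1 h2
  have h := Dl_scale c hc m i
  have h0 : (c ^ (m + i) - 1) * Dl (univ : Finset (ZMod p)) m i = 0 := by
    rw [sub_mul, one_mul, ← h, sub_self]
  rcases mul_eq_zero.1 h0 with h' | h'
  · exact absurd (sub_eq_zero.1 h') hcn
  · exact h'

lemma mem_pcs_erase {t : ZMod p} {α : Finset (ZMod p)} {m : ℕ}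
    (hα : α ∈ ((univ : Finset (ZMod p)).erase t).powersetCard m) : t ∉ α := by
  rw [mem_powersetCard] at hα
  exact fun ht => (notMem_erase t univ) (hα.1 ht)

lemma Dl_split0 (t : ZMod p) (m : ℕ) :
    Dl (univ : Finset (ZMod p)) (m + 1) 0
      = Dl (univ.erase t) (m + 1) 0 + t * Dl (univ.erase t) m 0 := by
  have h : t ∉ (univ : Finset (ZMod p)).erase t := notMem_erase t univ
  conv_lhs => rw [Dl, ← insert_erase (mem_univ t)]
  rw [sum_pcs_insert h m (fun α => piProd α * esym 0 α)]
  congr 1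
  rw [Dl, mul_sum]
  refine sum_congr rfl fun α hα => ?_
  rw [piProd_insert (mem_pcs_erase hα), esym_zero, esym_zero]
  ring

lemma Dl_split (t : ZMod p) (m i : ℕ) :
    Dl (univ : Finset (ZMod p)) (m + 1) (i + 1)
      = Dl (univ.erase t) (m + 1) (i + 1) + t * Dl (univ.erase t) m (i + 1)
        + t ^ 2 * Dl (univ.erase t) m i := by
  have h : t ∉ (univ : Finset (ZMod p)).erase t := notMem_erase t univ
  conv_lhs => rw [Dl, ← insert_erase (mem_univ t)]
  rw [sum_pcs_insert h m (fun α => piProd α * esym (i + 1) α), add_assoc]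
  congr 1
  rw [Dl, Dl, mul_sum, mul_sum, ← sum_add_distrib]
  refine sum_congr rfl fun α hα => ?_
  rw [piProd_insert (mem_pcs_erase hα), esym_insert (mem_pcs_erase hα)]
  ring

lemma Dl_erase (t : ZMod p) : ∀ m i : ℕ, m + i ≤ p - 2 →
    Dl ((univ : Finset (ZMod p)).erase t) m i
      = (-1 : ZMod p) ^ m * (m.choose i : ZMod p) * t ^ (m + i) := by
  intro m
  induction m with
  | zero =>
      intro i hi
      rw [Dl, powersetCard_zero, sum_singleton]
      cases i with
      | zero => simp [piProd, esym]
      | succ i =>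
          rw [piProd, esym, powersetCard_eq_empty.2 (by simp), sum_empty,
            Nat.choose_eq_zero_of_lt (Nat.succ_pos i)]
          simp
  | succ m ih =>
      intro i hi
      cases i with
      | zero =>
          have hz : Dl (univ : Finset (ZMod p)) (m + 1) 0 = 0 :=
            Dl_univ_zero (m + 1) 0 (by omega) (by omega)
          have h0 := Dl_split0 t m
          rw [hz, ih 0 (by omega)] at h0
          simp only [Nat.choose_zero_right, Nat.cast_one, Nat.add_zero] at h0 ⊢
          linear_combination -h0
      | succ i =>
          have hz : Dl (univ : Finset (ZMod p)) (m + 1) (i + 1) = 0 :=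
            Dl_univ_zero (m + 1) (i + 1) (by omega) (by omega)
          have h0 := Dl_split t m i
          rw [hz, ih (i + 1) (by omega), ih i (by omega)] at h0
          rw [Nat.choose_succ_succ (m) (i), Nat.cast_add]
          have hexp1 : m + (i + 1) = m + i + 1 := by omega
          have hexp2 : m + 1 + (i + 1) = m + i + 2 := by omega
          rw [hexp1] at h0
          rw [hexp2]
          linear_combination -h0
  
/-- Lemma 2.5 (first part): for 0 <= j <= k with 1 <= k+j < p,
b_{k,j}(t) = (-1)^(k+1) * C(k,j) * t^(k+j). -/
theorem bkj_eq (p : ℕ) [Fact p.Prime] (k j : ℕ) (hjk : j ≤ k)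
    (h1 : 1 ≤ k + j) (h2 : k + j < p) (t : ZMod p) :
    bkj p k j t = (-1 : ZMod p) ^ (k + 1) * (k.choose j : ZMod p) * t ^ (k + j) := by
  have hp2 : 2 ≤ p := (Fact.out : p.Prime).two_le
  obtain ⟨k', rfl⟩ : ∃ k', k = k' + 1 := ⟨k - 1, by omega⟩
  rw [bkj, Nat.add_sub_cancel]
  cases j with
  | zero =>
      have hD := Dl_erase t k' 0 (by omega)
      rw [Dl] at hD
      calc ∑ α ∈ ((univ : Finset (ZMod p)).erase t).powersetCard k',
              t * piProd α * esym 0 (insert t α)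
          = t * ∑ α ∈ ((univ : Finset (ZMod p)).erase t).powersetCard k',
              piProd α * esym 0 α := by
            rw [mul_sum]
            refine sum_congr rfl fun α hα => ?_
            rw [esym_zero, esym_zero]; ring
        _ = (-1 : ZMod p) ^ (k' + 1 + 1) * ((k' + 1).choose 0 : ZMod p) * t ^ (k' + 1 + 0) := by
            rw [hD]
            simp only [Nat.choose_zero_right, Nat.cast_one, Nat.add_zero]
            ring
  | succ j' =>
      have hD1 := Dl_erase t k' (j' + 1) (by omega)
      have hD2 := Dl_erase t k' j' (by omega)
      rw [Dl] at hD1 hD2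
      calc ∑ α ∈ ((univ : Finset (ZMod p)).erase t).powersetCard k',
              t * piProd α * esym (j' + 1) (insert t α)
          = t * (∑ α ∈ ((univ : Finset (ZMod p)).erase t).powersetCard k',
              piProd α * esym (j' + 1) α)
            + t ^ 2 * (∑ α ∈ ((univ : Finset (ZMod p)).erase t).powersetCard k',
              piProd α * esym j' α) := by
            rw [mul_sum, mul_sum, ← sum_add_distrib]
            refine sum_congr rfl fun α hα => ?_
            rw [esym_insert (mem_pcs_erase hα)]
            ring
        _ = (-1 : ZMod p) ^ (k' + 1 + 1) * (((k' + 1).choose (j' + 1)) : ZMod p)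
              * t ^ (k' + 1 + (j' + 1)) := by
            rw [hD1, hD2, Nat.choose_succ_succ k' j', Nat.cast_add]
            have hexp1 : k' + (j' + 1) = k' + j' + 1 := by omega
            have hexp2 : k' + 1 + (j' + 1) = k' + j' + 2 := by omega
            rw [hexp1, hexp2]
            ring
end Aux
end

section
/- Let p be a prime and suppose 0 ≤ j ≤ k with p-1 < k+j < 2p-2. Then d_{k,j} = Σ_{α ∈ S_k} π(α)·σ_j(α) = 0 in F_p, where the sum is over all k-element subsets α of F_p. -/
open Finset

/-- Lemma 2.6 (d part): for 0 <= j <= k with p-1 < k+j < 2p-2, d_{k,j} = 0. -/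
theorem dkj_eq_zero (p : ℕ) [Fact p.Prime] (k j : ℕ) (hjk : j ≤ k)
    (h1 : p - 1 < k + j) (h2 : k + j < 2 * p - 2) :
    dkj p k j = 0 := by
  obtain ⟨g, hg⟩ := IsCyclic.exists_generator (α := (ZMod p)ˣ)
  have hp2 : 2 ≤ p := (Fact.out : p.Prime).two_le
  have hord : orderOf g = p - 1 := by
    rw [orderOf_eq_card_of_forall_mem_zpowers hg, Nat.card_eq_fintype_card,
      ZMod.card_units_eq_totient, Nat.totient_prime Fact.out]
  have hne : (g : ZMod p) ^ (k + j) ≠ 1 := by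
    intro h
    have hu : g ^ (k + j) = 1 := Units.ext (by push_cast; exact h)
    have hdvd : p - 1 ∣ k + j := hord ▸ orderOf_dvd_of_pow_eq_one hu
    obtain ⟨c, hc⟩ := hdvd
    rcases c with _ | _ | c
    · omega
    · omega
    · have h3 : (p - 1) * 2 ≤ (p - 1) * (c + 1 + 1) := Nat.mul_le_mul_left _ (by omega)
      omega
  have hg0 : (g : ZMod p) ≠ 0 := g.ne_zero
  set f : ZMod p ↪ ZMod p := (Equiv.mulLeft₀ (g : ZMod p) hg0).toEmbedding with hfdef
  have hf : ∀ x, f x = (g : ZMod p) * x := fun x => rfl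
  have key : dkj p k j = (g : ZMod p) ^ (k + j) * dkj p k j := by
    unfold dkj
    rw [Finset.mul_sum]
    nth_rewrite 1 [show (univ : Finset (ZMod p)) = univ.map f from
      (Finset.map_univ_equiv _).symm]
    rw [Finset.powersetCard_map, Finset.sum_map]
    refine Finset.sum_congr rfl (fun α hα => ?_)
    have hαk : α.card = k := (Finset.mem_powersetCard.mp hα).2
    simp only [RelEmbedding.coe_toEmbedding, Finset.mapEmbedding_apply]
    have hpi : ∀ (β : Finset (ZMod p)), piProd (β.map f) = (g : ZMod p) ^ β.card * piProd β := by
      intro β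
      unfold piProd
      rw [Finset.prod_map]
      simp only [hf]
      rw [Finset.prod_mul_distrib, Finset.prod_const]
    have hes : esym j (α.map f) = (g : ZMod p) ^ j * esym j α := by
      unfold esym
      rw [Finset.powersetCard_map, Finset.sum_map, Finset.mul_sum]
      refine Finset.sum_congr rfl (fun β hβ => ?_)
      have hβj : β.card = j := (Finset.mem_powersetCard.mp hβ).2
      simp only [RelEmbedding.coe_toEmbedding, Finset.mapEmbedding_apply]
      have := hpi β
      unfold piProd at this
      rw [this, hβj]
    rw [hpi, hes, hαk, pow_add]
    ring
  have : ((g : ZMod p) ^ (k + j) - 1) * dkj p k j = 0 := by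
    rw [sub_mul, one_mul, ← key, sub_self]
  rcases mul_eq_zero.mp this with h | h
  · exact absurd (sub_eq_zero.mp h) hne
  · exact h
end

section
/- Let p be a prime, and let b, c, j be non-negative integers. Then Σ_{γ ∈ S_c} Σ_{α ∈ S_{b,γ}} σ_j(γ)·π(γ)·π(α) = C(b+c-j, b) · d_{b+c,j} in F_p, where S_c is the set of c-element subsets of F_p, S_{b,γ} is the set of b-element subsets of F_p disjoint from γ, π denotes the product of the elements of a set, σ_j is the j-th elementary symmetric polynomial, and d_{k,j} = Σ_{θ ∈ S_k} π(θ)·σ_j(θ). -/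
open Finset

/-- Lemma 2.7: the double sum over c-subsets and disjoint b-subsets of
sigma_j(gamma) * pi(gamma) * pi(alpha) equals C(b+c-j, b) * d_{b+c,j}. -/
theorem count_lemma (p : ℕ) [Fact p.Prime] (b c j : ℕ) :
    ∑ γ ∈ (Finset.univ : Finset (ZMod p)).powersetCard c,
      ∑ α ∈ ((Finset.univ : Finset (ZMod p)) \ γ).powersetCard b,
        esym j γ * piProd γ * piProd α
      = ((b + c - j).choose b : ZMod p) * dkj p (b + c) j := by
  rcases le_or_gt j c with hjc | hjc
  · -- main case
    -- rewrite LHS as a sum over triples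
    have hL : ∑ γ ∈ (Finset.univ : Finset (ZMod p)).powersetCard c,
      ∑ α ∈ ((Finset.univ : Finset (ZMod p)) \ γ).powersetCard b,
        esym j γ * piProd γ * piProd α
      = ∑ x ∈ ((Finset.univ : Finset (ZMod p)).powersetCard c).sigma
          (fun γ => (((Finset.univ : Finset (ZMod p)) \ γ).powersetCard b).sigma
            (fun _ => γ.powersetCard j)),
          (∏ t ∈ x.2.2, t) * piProd x.1 * piProd x.2.1 := by
      rw [Finset.sum_sigma]
      refine Finset.sum_congr rfl fun γ hγ => ?_
      rw [Finset.sum_sigma]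
      refine Finset.sum_congr rfl fun α hα => ?_
      rw [esym, Finset.sum_mul, Finset.sum_mul]
    have hR : ((b + c - j).choose b : ZMod p) * dkj p (b + c) j
      = ∑ x ∈ ((Finset.univ : Finset (ZMod p)).powersetCard (b + c)).sigma
          (fun θ => (θ.powersetCard j).sigma
            (fun β => (θ \ β).powersetCard (c - j))),
          piProd x.1 * (∏ t ∈ x.2.1, t) := by
      rw [Finset.sum_sigma, dkj, Finset.mul_sum]
      refine Finset.sum_congr rfl fun θ hθ => ?_
      rw [Finset.sum_sigma, esym, Finset.mul_sum, Finset.mul_sum]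
      refine Finset.sum_congr rfl fun β hβ => ?_
      have hθc : θ.card = b + c := (Finset.mem_powersetCard.mp hθ).2
      have hβθ := Finset.mem_powersetCard.mp hβ
      have hcard : (θ \ β).card = b + c - j := by
        rw [Finset.card_sdiff_of_subset hβθ.1, hθc, hβθ.2]
      have hch : (b + c - j).choose (c - j) = (b + c - j).choose b := by
        rw [← Nat.choose_symm (by omega)]
        congr 1
        omega
      calc ((b + c - j).choose b : ZMod p) * (piProd θ * ∏ x ∈ β, x)
          = ((θ \ β).powersetCard (c - j)).card • (piProd θ * ∏ x ∈ β, x) := by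
            rw [Finset.card_powersetCard, hcard, hch, nsmul_eq_mul]
        _ = _ := (Finset.sum_const _).symm
    rw [hL, hR]
    refine Finset.sum_nbij' (i := fun x => ⟨x.1 ∪ x.2.1, x.2.2, x.1 \ x.2.2⟩)
      (j := fun y => ⟨y.2.1 ∪ y.2.2, y.1 \ (y.2.1 ∪ y.2.2), y.2.1⟩) ?_ ?_ ?_ ?_ ?_
    · rintro ⟨γ, α, β⟩ hx
      simp only [Finset.mem_sigma, Finset.mem_powersetCard] at hx ⊢
      obtain ⟨⟨-, hγc⟩, ⟨hαs, hαc⟩, hβγ, hβc⟩ := hx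
      have hdis : Disjoint γ α := by
        refine Finset.disjoint_left.mpr fun t ht hta => ?_
        exact (Finset.mem_sdiff.mp (hαs hta)).2 ht
      refine ⟨⟨Finset.subset_univ _, ?_⟩, ⟨?_, hβc⟩, ?_, ?_⟩
      · rw [Finset.card_union_of_disjoint hdis, hγc, hαc]; ring
      · exact hβγ.trans Finset.subset_union_left
      · exact Finset.sdiff_subset_sdiff Finset.subset_union_left (le_refl _)
      · rw [Finset.card_sdiff_of_subset hβγ, hγc, hβc]
    · rintro ⟨θ, β, δ⟩ hy
      simp only [Finset.mem_sigma, Finset.mem_powersetCard] at hy ⊢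
      obtain ⟨⟨-, hθc⟩, ⟨hβθ, hβc⟩, hδ, hδc⟩ := hy
      have hdis : Disjoint β δ := by
        refine Finset.disjoint_left.mpr fun t ht htd => ?_
        exact (Finset.mem_sdiff.mp (hδ htd)).2 ht
      have hγc : (β ∪ δ).card = c := by
        rw [Finset.card_union_of_disjoint hdis, hβc, hδc]; omega
      have hsub : β ∪ δ ⊆ θ := Finset.union_subset hβθ (hδ.trans Finset.sdiff_subset)
      refine ⟨⟨Finset.subset_univ _, hγc⟩, ⟨?_, ?_⟩, Finset.subset_union_left, hβc⟩
      · intro t ht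
        simp only [Finset.mem_sdiff] at ht ⊢
        exact ⟨Finset.mem_univ _, ht.2⟩
      · rw [Finset.card_sdiff_of_subset hsub, hθc, hγc]; omega
    · rintro ⟨γ, α, β⟩ hx
      simp only [Finset.mem_sigma, Finset.mem_powersetCard] at hx
      obtain ⟨⟨-, hγc⟩, ⟨hαs, hαc⟩, hβγ, hβc⟩ := hx
      have hdis : Disjoint γ α := by
        refine Finset.disjoint_left.mpr fun t ht hta => ?_
        exact (Finset.mem_sdiff.mp (hαs hta)).2 ht
      have h1 : β ∪ γ \ β = γ := Finset.union_sdiff_of_subset hβγ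
      simp only [h1]
      have h2 : (γ ∪ α) \ γ = α := Finset.union_sdiff_cancel_left hdis
      simp [h2]
    · rintro ⟨θ, β, δ⟩ hy
      simp only [Finset.mem_sigma, Finset.mem_powersetCard] at hy
      obtain ⟨⟨-, hθc⟩, ⟨hβθ, hβc⟩, hδ, hδc⟩ := hy
      have hdis : Disjoint β δ := by
        refine Finset.disjoint_left.mpr fun t ht htd => ?_
        exact (Finset.mem_sdiff.mp (hδ htd)).2 ht
      have hsub : β ∪ δ ⊆ θ := Finset.union_subset hβθ (hδ.trans Finset.sdiff_subset)
      have h1 : β ∪ δ ∪ θ \ (β ∪ δ) = θ := Finset.union_sdiff_of_subset hsub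
      have h2 : (β ∪ δ) \ β = δ := Finset.union_sdiff_cancel_left hdis
      simp [h1, h2]
    · rintro ⟨γ, α, β⟩ hx
      simp only [Finset.mem_sigma, Finset.mem_powersetCard] at hx
      obtain ⟨⟨-, hγc⟩, ⟨hαs, hαc⟩, hβγ, hβc⟩ := hx
      have hdis : Disjoint γ α := by
        refine Finset.disjoint_left.mpr fun t ht hta => ?_
        exact (Finset.mem_sdiff.mp (hαs hta)).2 ht
      simp only [piProd, Finset.prod_union hdis]
      ring
  · -- j > c : both sides zero
    have hL : ∀ γ ∈ (Finset.univ : Finset (ZMod p)).powersetCard c,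
        esym j γ = 0 := by
      intro γ hγ
      have hγc : γ.card = c := (Finset.mem_powersetCard.mp hγ).2
      rw [esym, Finset.powersetCard_eq_empty.mpr (by omega), Finset.sum_empty]
    have hL0 : ∑ γ ∈ (Finset.univ : Finset (ZMod p)).powersetCard c,
      ∑ α ∈ ((Finset.univ : Finset (ZMod p)) \ γ).powersetCard b,
        esym j γ * piProd γ * piProd α = 0 := by
      refine Finset.sum_eq_zero fun γ hγ => Finset.sum_eq_zero fun α hα => ?_
      rw [hL γ hγ, zero_mul, zero_mul]
    rw [hL0]
    rcases le_or_gt j (b + c) with hjbc | hjbc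
    · rw [Nat.choose_eq_zero_of_lt (by omega)]
      simp
    · have : dkj p (b + c) j = 0 := by
        refine Finset.sum_eq_zero fun θ hθ => ?_
        have hθc : θ.card = b + c := (Finset.mem_powersetCard.mp hθ).2
        rw [esym, Finset.powersetCard_eq_empty.mpr (by omega), Finset.sum_empty, mul_zero]
      rw [this, mul_zero]
end

section
/- Let p be an odd prime and F a field of characteristic p. In the expansion of N(Z) = Π_{m∈F_p} (Z + mY + C(m,2)X) as A_0 + A_1 X + ⋯ + A_p X^p with A_i ∈ F[Y,Z], one has A_p = 0 and A_{p-1} = 0. -/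
open MvPolynomial

/-- The norm N(Z) of the terminal variable of V_3, written as a polynomial in X over
F[Y,Z], where Y = X 0 and Z = X 1 and sigma^m(Z) = Z + m*Y + C(m,2)*X.
So N(Z) = prod over m in F_p of (Z + m*Y + C(m,2)*X). -/
noncomputable def normZ (p : ℕ) (F : Type*) [Field F] :
    Polynomial (MvPolynomial (Fin 2) F) :=
  ∏ m ∈ Finset.range p,
    (Polynomial.C (X 1 + (m : MvPolynomial (Fin 2) F) * X 0) +
      Polynomial.C (m.choose 2 : MvPolynomial (Fin 2) F) * Polynomial.X)

/-- Theorem 2.1 (part): writing N(Z) = A_0 + A_1 X + ... + A_p X^p with A_i in F[Y,Z],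
one has A_p = 0 and A_{p-1} = 0. -/
theorem normZ_coeff_top (p : ℕ) [Fact p.Prime] (hp : 2 < p) (F : Type*) [Field F]
    [CharP F p] :
    (normZ p F).coeff p = 0 ∧ (normZ p F).coeff (p - 1) = 0 := by
  have hdeg : (normZ p F).natDegree ≤ p - 2 := by
    refine le_trans (Polynomial.natDegree_prod_le _ _) ?_
    have hbound : ∀ m ∈ Finset.range p,
        (Polynomial.C (X 1 + (m : MvPolynomial (Fin 2) F) * X 0) +
          Polynomial.C (m.choose 2 : MvPolynomial (Fin 2) F) * Polynomial.X).natDegree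
        ≤ if m ≤ 1 then 0 else 1 := by
      intro m _
      by_cases hm : m ≤ 1
      · have hch : m.choose 2 = 0 := by
          interval_cases m <;> rfl
        simp only [hm, if_true, hch, Nat.cast_zero, map_zero, zero_mul, add_zero,
          Polynomial.natDegree_C, le_refl]
      · simp only [hm, if_false]
        refine le_trans (Polynomial.natDegree_add_le _ _) ?_
        simp only [Polynomial.natDegree_C, max_le_iff]
        constructor
        · omega
        · exact le_trans (Polynomial.natDegree_mul_le)
            (by simp [Polynomial.natDegree_X_le])
    refine le_trans (Finset.sum_le_sum hbound) ?_
    have : ∑ m ∈ Finset.range p, (if m ≤ 1 then 0 else 1)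
        = ∑ m ∈ Finset.Ico 2 p, 1 := by
      rw [Finset.range_eq_Ico, ← Finset.sum_Ico_consecutive _ (by omega : 0 ≤ 2) (by omega : 2 ≤ p)]
      have h1 : ∑ m ∈ Finset.Ico 0 2, (if m ≤ 1 then 0 else 1) = 0 := by decide
      rw [h1, zero_add]
      apply Finset.sum_congr rfl
      intro m hm
      simp only [Finset.mem_Ico] at hm
      simp [show ¬ m ≤ 1 by omega]
    rw [this, Finset.sum_const, Nat.card_Ico, smul_eq_mul, mul_one]
  constructor
  · exact Polynomial.coeff_eq_zero_of_natDegree_lt (by omega)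
  · exact Polynomial.coeff_eq_zero_of_natDegree_lt (by omega)
end

section
/- Let p > 2 be prime and F a field of characteristic p. Let Z/p act on F[X_i,Y_i (i≤m), X_i,Y_i,Z_i (m<i≤m+ℓ)] with Δ(Z_i)=Y_i, Δ(Y_i)=X_i, Δ(X_i)=0, where Δ = σ-1. Let I be the ideal generated by {X_i : 1≤i≤m+ℓ} ∪ {Y_i Y_j : m<i≤j≤m+ℓ} ∪ {Y_i^p : 1≤i≤m} ∪ {Z_i^p : m<i≤m+ℓ}. If β is a monomial dividing (Y_1⋯Y_m Z_{m+1}⋯Z_{m+ℓ})^{p-1}, then Tr(β) = Σ_{j=0}^{p-1} σ^j(β) ∈ I. -/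
open MvPolynomial

/-- Variable X_i of F[mV_2 + lV_3] (i = 1,...,m+l). -/
noncomputable def XV (m l : ℕ) (F : Type*) [CommRing F] (i : Fin (m + l)) :
    MvPolynomial (Fin (m + l) ⊕ Fin (m + l) ⊕ Fin l) F := X (Sum.inl i)

/-- Variable Y_i of F[mV_2 + lV_3] (i = 1,...,m+l). -/
noncomputable def YV (m l : ℕ) (F : Type*) [CommRing F] (i : Fin (m + l)) :
    MvPolynomial (Fin (m + l) ⊕ Fin (m + l) ⊕ Fin l) F := X (Sum.inr (Sum.inl i))

/-- Variable Z_{m+j} of F[mV_2 + lV_3] (j = 1,...,l). -/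
noncomputable def ZV (m l : ℕ) (F : Type*) [CommRing F] (j : Fin l) :
    MvPolynomial (Fin (m + l) ⊕ Fin (m + l) ⊕ Fin l) F := X (Sum.inr (Sum.inr j))

/-- The generator sigma of Z/p on F[mV_2 + lV_3]: sigma(X_i) = X_i,
sigma(Y_i) = Y_i + X_i, sigma(Z_i) = Z_i + Y_i (note C(1,2) = 0). -/
noncomputable def sigmaV23 (m l : ℕ) (F : Type*) [CommRing F] :
    MvPolynomial (Fin (m + l) ⊕ Fin (m + l) ⊕ Fin l) F →ₐ[F]
      MvPolynomial (Fin (m + l) ⊕ Fin (m + l) ⊕ Fin l) F :=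
  aeval (Sum.elim (fun i => XV m l F i)
    (Sum.elim (fun i => YV m l F i + XV m l F i)
      (fun j => ZV m l F j + YV m l F (Fin.natAdd m j))))

/-- The monomial generating set Lambda of the Hilbert ideal of mV_2 + lV_3:
X_i for all i, Y_i^p for i <= m, Y_i*Y_j for m < i <= j, and Z_i^p for i > m. -/
noncomputable def LambdaV23 (p m l : ℕ) (F : Type*) [CommRing F] :
    Set (MvPolynomial (Fin (m + l) ⊕ Fin (m + l) ⊕ Fin l) F) :=
  (Set.range fun i : Fin (m + l) => XV m l F i) ∪
  (Set.range fun i : Fin m => YV m l F (Fin.castAdd l i) ^ p) ∪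
  {f | ∃ i j : Fin l, f = YV m l F (Fin.natAdd m i) * YV m l F (Fin.natAdd m j)} ∪
  (Set.range fun j : Fin l => ZV m l F j ^ p)

section Aux

variable (p m l : ℕ) (F : Type*) [CommRing F]

lemma sigmaV23_X (i : Fin (m + l)) : sigmaV23 m l F (XV m l F i) = XV m l F i := by
  simp [sigmaV23, XV]

lemma sigmaV23_Y (i : Fin (m + l)) :
    sigmaV23 m l F (YV m l F i) = YV m l F i + XV m l F i := by
  simp [sigmaV23, XV, YV]

lemma sigmaV23_Z (j : Fin l) :
    sigmaV23 m l F (ZV m l F j) = ZV m l F j + YV m l F (Fin.natAdd m j) := by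
  simp [sigmaV23, XV, YV, ZV]

lemma memI_X (i : Fin (m + l)) : XV m l F i ∈ Ideal.span (LambdaV23 p m l F) := by
  apply Ideal.subset_span
  simp only [LambdaV23, Set.mem_union, Set.mem_range, Set.mem_setOf_eq]
  exact Or.inl (Or.inl (Or.inl ⟨i, rfl⟩))

lemma memI_Yp (i : Fin m) :
    YV m l F (Fin.castAdd l i) ^ p ∈ Ideal.span (LambdaV23 p m l F) := by
  apply Ideal.subset_span
  simp only [LambdaV23, Set.mem_union, Set.mem_range, Set.mem_setOf_eq]
  exact Or.inl (Or.inl (Or.inr ⟨i, rfl⟩))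

lemma memI_YY (i j : Fin l) :
    YV m l F (Fin.natAdd m i) * YV m l F (Fin.natAdd m j) ∈
      Ideal.span (LambdaV23 p m l F) := by
  apply Ideal.subset_span
  simp only [LambdaV23, Set.mem_union, Set.mem_range, Set.mem_setOf_eq]
  exact Or.inl (Or.inr ⟨i, j, rfl⟩)

lemma memI_Zp (j : Fin l) : ZV m l F j ^ p ∈ Ideal.span (LambdaV23 p m l F) := by
  apply Ideal.subset_span
  simp only [LambdaV23, Set.mem_union, Set.mem_range, Set.mem_setOf_eq]
  exact Or.inr ⟨j, rfl⟩

lemma memI_Xp (hp : 1 ≤ p) (i : Fin (m + l)) :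
    XV m l F i ^ p ∈ Ideal.span (LambdaV23 p m l F) := by
  have : XV m l F i ^ p = XV m l F i * XV m l F i ^ (p - 1) := by
    rw [← pow_succ']
    congr 1
    omega
  rw [this]
  exact Ideal.mul_mem_right _ _ (memI_X p m l F i)

lemma memI_Y2p (hp : 2 ≤ p) (j : Fin l) :
    YV m l F (Fin.natAdd m j) ^ p ∈ Ideal.span (LambdaV23 p m l F) := by
  have : YV m l F (Fin.natAdd m j) ^ p =
      (YV m l F (Fin.natAdd m j) * YV m l F (Fin.natAdd m j)) *
        YV m l F (Fin.natAdd m j) ^ (p - 2) := by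
    rw [← sq, ← pow_add]
    congr 1
    omega
  rw [this]
  exact Ideal.mul_mem_right _ _ (memI_YY p m l F j j)

end Aux

/-- Lemma 3.3: if beta is a monomial dividing (Y_1...Y_m Z_{m+1}...Z_{m+l})^(p-1), then
Tr(beta), the sum of sigma^j(beta) over j = 0,...,p-1, lies in the ideal generated by
Lambda. -/
theorem transfer_mem_V23 (p m l : ℕ) [Fact p.Prime] (hp : 2 < p) (F : Type*) [Field F]
    [CharP F p] (a : Fin m → ℕ) (b : Fin l → ℕ)
    (ha : ∀ i, a i ≤ p - 1) (hb : ∀ j, b j ≤ p - 1) :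
    (∑ c ∈ Finset.range p, (⇑(sigmaV23 m l F))^[c]
        ((∏ i, YV m l F (Fin.castAdd l i) ^ a i) * ∏ j, ZV m l F j ^ b j))
      ∈ Ideal.span (LambdaV23 p m l F) := by
  classical
  have hp2 : 2 ≤ p := le_of_lt hp
  have hp1 : 1 ≤ p := le_trans (by norm_num) hp2
  set σf := sigmaV23 m l F with hσdef
  set I := Ideal.span (LambdaV23 p m l F) with hIdef
  set K := Ideal.span (LambdaV23 p m l F ∪
      Set.range fun j : Fin l => YV m l F (Fin.natAdd m j)) with hKdef
  have hIK : I ≤ K := Ideal.span_mono Set.subset_union_left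
  -- sigma maps generators of I into I
  have hσΛ : ∀ g ∈ LambdaV23 p m l F, σf g ∈ I := by
    intro g hg
    simp only [LambdaV23, Set.mem_union, Set.mem_range, Set.mem_setOf_eq] at hg
    obtain (((⟨i, rfl⟩ | ⟨i, rfl⟩) | ⟨i, j, rfl⟩) | ⟨j, rfl⟩) := hg
    · rw [hσdef, sigmaV23_X]
      exact memI_X p m l F i
    · rw [map_pow, hσdef, sigmaV23_Y, add_pow_char]
      exact Ideal.add_mem _ (memI_Yp p m l F i) (memI_Xp p m l F hp1 _)
    · rw [map_mul, hσdef, sigmaV23_Y, sigmaV23_Y]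
      have hexp : (YV m l F (Fin.natAdd m i) + XV m l F (Fin.natAdd m i)) *
          (YV m l F (Fin.natAdd m j) + XV m l F (Fin.natAdd m j))
          = YV m l F (Fin.natAdd m i) * YV m l F (Fin.natAdd m j)
            + (YV m l F (Fin.natAdd m i) * XV m l F (Fin.natAdd m j)
            + (YV m l F (Fin.natAdd m j) * XV m l F (Fin.natAdd m i)
            + XV m l F (Fin.natAdd m i) * XV m l F (Fin.natAdd m j))) := by ring
      rw [hexp]
      refine Ideal.add_mem _ (memI_YY p m l F i j) (Ideal.add_mem _ ?_ (Ideal.add_mem _ ?_ ?_))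
      · exact Ideal.mul_mem_left _ _ (memI_X p m l F _)
      · exact Ideal.mul_mem_left _ _ (memI_X p m l F _)
      · exact Ideal.mul_mem_left _ _ (memI_X p m l F _)
    · rw [map_pow, hσdef, sigmaV23_Z, add_pow_char]
      exact Ideal.add_mem _ (memI_Zp p m l F j) (memI_Y2p p m l F hp2 j)
  -- sigma preserves I
  have hσI : ∀ x ∈ I, σf x ∈ I := by
    intro x hx
    refine Submodule.span_induction (fun g hg => hσΛ g hg) (by simp)
      (fun x y _ _ hx hy => by rw [map_add]; exact Ideal.add_mem _ hx hy)
      (fun r x _ hx => ?_) hx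
    rw [smul_eq_mul, map_mul]
    exact Ideal.mul_mem_left _ _ hx
  -- sigma x - x lies in K for every x
  have hB : ∀ x, σf x - x ∈ K := by
    intro x
    induction x using MvPolynomial.induction_on with
    | C r => simp
    | add f g hf hg =>
      have := Ideal.add_mem _ hf hg
      rw [map_add]
      convert this using 1
      ring
    | mul_X f n hf =>
      have hXn : σf (X n) - X n ∈ K := by
        rcases n with i | n
        · show σf (XV m l F i) - XV m l F i ∈ K
          rw [hσdef, sigmaV23_X, sub_self]
          exact zero_mem K
        · rcases n with i | j
          · show σf (YV m l F i) - YV m l F i ∈ K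
            rw [hσdef, sigmaV23_Y]
            simpa using hIK (memI_X p m l F i)
          · show σf (ZV m l F j) - ZV m l F j ∈ K
            rw [hσdef, sigmaV23_Z]
            have : YV m l F (Fin.natAdd m j) ∈ K :=
              Ideal.subset_span (Or.inr ⟨j, rfl⟩)
            simpa using this
      have h1 : σf f * (σf (X n) - X n) ∈ K := Ideal.mul_mem_left _ _ hXn
      have h2 : (σf f - f) * X n ∈ K := Ideal.mul_mem_right _ _ hf
      have := Ideal.add_mem _ h1 h2
      rw [map_mul]
      convert this using 1
      ring
  -- products of two elements of K lie in I
  have hKK : ∀ x ∈ K, ∀ y ∈ K, x * y ∈ I := by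
    have hle : K * K ≤ I := by
      rw [hKdef, Ideal.span_mul_span', Ideal.span_le]
      rintro z hz
      rw [Set.mem_mul] at hz
      obtain ⟨x, hx, y, hy, rfl⟩ := hz
      rcases hx with hx | ⟨i, rfl⟩
      · exact Ideal.mul_mem_right _ _ (Ideal.subset_span hx)
      · rcases hy with hy | ⟨j, rfl⟩
        · exact Ideal.mul_mem_left _ _ (Ideal.subset_span hy)
        · exact memI_YY p m l F i j
    intro x hx y hy
    exact hle (Ideal.mul_mem_mul hx hy)
  -- sigma x - x lies in I for x in K
  have hD : ∀ x ∈ K, σf x - x ∈ I := by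
    intro x hx
    refine Submodule.span_induction ?_ (by simp) ?_ ?_ hx
    · rintro g (hg | ⟨j, rfl⟩)
      · exact Ideal.sub_mem _ (hσΛ g hg) (Ideal.subset_span hg)
      · rw [hσdef, sigmaV23_Y]
        simpa using memI_X p m l F (Fin.natAdd m j)
    · intro x y _ _ hx hy
      have := Ideal.add_mem _ hx hy
      rw [map_add]
      convert this using 1
      ring
    · intro r x hxK hx
      rw [smul_eq_mul, map_mul]
      have h1 : σf r * (σf x - x) ∈ I := Ideal.mul_mem_left _ _ hx
      have h2 : (σf r - r) * x ∈ I := hKK _ (hB r) _ hxK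
      have := Ideal.add_mem _ h1 h2
      convert this using 1
      ring
  -- iterates: sigma^c x = x + c (sigma x - x) modulo I
  have hE : ∀ x, ∀ c : ℕ, (⇑σf)^[c] x - x - c • (σf x - x) ∈ I := by
    intro x c
    induction c with
    | zero => simpa using zero_mem I
    | succ c ih =>
      have key : (⇑σf)^[c + 1] x - x - (c + 1) • (σf x - x)
          = σf ((⇑σf)^[c] x - x - c • (σf x - x))
            + c • (σf (σf x - x) - (σf x - x)) := by
        simp only [Function.iterate_succ_apply', map_sub, map_nsmul]
        simp only [nsmul_eq_mul, Nat.cast_add, Nat.cast_one]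
        ring
      rw [key]
      refine Ideal.add_mem _ (hσI _ ih) ?_
      exact nsmul_mem (hD _ (hB x)) c
  -- assemble
  set β := (∏ i, YV m l F (Fin.castAdd l i) ^ a i) * ∏ j, ZV m l F j ^ b j with hβ
  have hsplit : ∑ c ∈ Finset.range p, (⇑σf)^[c] β
      = (∑ c ∈ Finset.range p, (β + c • (σf β - β)))
        + ∑ c ∈ Finset.range p, ((⇑σf)^[c] β - β - c • (σf β - β)) := by
    rw [← Finset.sum_add_distrib]
    refine Finset.sum_congr rfl fun c _ => ?_
    ring
  have hchar : CharP (MvPolynomial (Fin (m + l) ⊕ Fin (m + l) ⊕ Fin l) F) p :=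
    inferInstance
  have hfirst : (∑ c ∈ Finset.range p, (β + c • (σf β - β))) = 0 := by
    rw [Finset.sum_add_distrib, Finset.sum_const, Finset.card_range, ← Finset.sum_smul]
    have h1 : (p : MvPolynomial (Fin (m + l) ⊕ Fin (m + l) ⊕ Fin l) F) = 0 :=
      CharP.cast_eq_zero _ p
    have hdvd : p ∣ ∑ c ∈ Finset.range p, c := by
      have h2 : (∑ c ∈ Finset.range p, c) * 2 = p * (p - 1) :=
        Finset.sum_range_id_mul_two p
      have h3 : p ∣ (∑ c ∈ Finset.range p, c) * 2 := h2 ▸ Dvd.intro _ rfl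
      rcases (Fact.out : p.Prime).dvd_mul.mp h3 with h | h
      · exact h
      · exact absurd (Nat.le_of_dvd (by norm_num) h) (by omega)
    have h4 : ((∑ c ∈ Finset.range p, c : ℕ) :
        MvPolynomial (Fin (m + l) ⊕ Fin (m + l) ⊕ Fin l) F) = 0 :=
      (CharP.cast_eq_zero_iff _ p _).mpr hdvd
    rw [nsmul_eq_mul, nsmul_eq_mul, h1, h4, zero_mul, zero_mul, add_zero]
  rw [hsplit, hfirst, zero_add]
  exact Ideal.sum_mem _ fun c _ => hE β c
end

section
/- Let p be a prime, F a field of characteristic p, and Z/p act on the polynomial ring F[X_1,…,X_5] with a generator σ satisfying σ(X_i) = X_i + X_{i-1} + (lower Jordan terms), i.e., σ^j(X_5) ≡ X_5 + jX_4 + C(j,2)X_3 + C(j,3)X_2 + C(j,4)X_1. Suppose a, b, c, d are non-negative integers with c + 2b + 3a < p-1. Then the monomial X_2^a X_3^b X_4^c X_5^d does not appear (has zero coefficient) in the transfer Tr(X_5^i) = Σ_{j∈F_p} σ^j(X_5^i). -/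
open MvPolynomial

/-- The generator sigma of Z/p acting on F[V_5] = F[X_1,...,X_5] as a single Jordan
block: sigma(X_1) = X_1 and sigma(X_i) = X_i + X_(i-1) for i > 1 (0-indexed here),
so that sigma^j(X_5) = X_5 + j X_4 + C(j,2) X_3 + C(j,3) X_2 + C(j,4) X_1. -/
noncomputable def sigmaV5 (F : Type*) [CommRing F] :
    MvPolynomial (Fin 5) F →ₐ[F] MvPolynomial (Fin 5) F :=
  aeval (fun i => if i = 0 then X 0 else X i + X (i - 1))

section Helpers

variable {F : Type*} [CommRing F]

lemma sigmaV5_X0 : sigmaV5 F (X 0) = X 0 := by simp [sigmaV5]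

lemma sigmaV5_X (t : Fin 5) (ht : t ≠ 0) : sigmaV5 F (X t) = X t + X (t-1) := by
  simp [sigmaV5, ht]

lemma sigma_iter_X4 (j : ℕ) :
    (⇑(sigmaV5 F))^[j] (X 4) =
      X 4 + j.choose 1 • X 3 + j.choose 2 • X 2 + j.choose 3 • X 1 + j.choose 4 • X 0 := by
  induction j with
  | zero => simp
  | succ n ih =>
    rw [Function.iterate_succ_apply', ih]
    have e4 : sigmaV5 F (X 4) = X 4 + X 3 := by
      rw [sigmaV5_X 4 (by decide)]; norm_num; rfl
    have e3 : sigmaV5 F (X 3) = X 3 + X 2 := by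
      rw [sigmaV5_X 3 (by decide)]; norm_num; rfl
    have e2 : sigmaV5 F (X 2) = X 2 + X 1 := by
      rw [sigmaV5_X 2 (by decide)]; norm_num; rfl
    have e1 : sigmaV5 F (X 1) = X 1 + X 0 := by
      rw [sigmaV5_X 1 (by decide)]; norm_num
    simp only [map_add, map_nsmul, e1, e2, e3, e4, sigmaV5_X0,
      Nat.choose_succ_succ, add_smul, smul_add]
    simp [Nat.choose_one_right, Nat.choose_zero_right]
    abel

lemma coeff_linear (c : Fin 5 → F) (u : Fin 5 →₀ ℕ) :
    ∃ n : ℕ, coeff u (∑ t : Fin 5, C (c t) * X t) = n • ∏ t : Fin 5, c t ^ u t := by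
  classical
  rw [MvPolynomial.coeff_sum]
  simp only [coeff_C_mul, coeff_X']
  by_cases hu : ∃ t0 : Fin 5, Finsupp.single t0 1 = u
  · obtain ⟨t0, ht0⟩ := hu
    refine ⟨1, ?_⟩
    rw [Finset.sum_eq_single t0]
    · rw [if_pos ht0, one_smul, ← ht0]
      rw [Finset.prod_eq_single t0]
      · simp
      · intro s _ hs
        rw [Finsupp.single_apply, if_neg (by exact fun h => hs h.symm), pow_zero]
      · simp
    · intro s _ hs
      rw [if_neg, mul_zero]
      rw [← ht0]
      intro h
      exact hs (by simpa using (Finsupp.single_left_injective one_ne_zero) h)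
    · simp
  · refine ⟨0, ?_⟩
    rw [zero_smul]
    apply Finset.sum_eq_zero
    intro t _
    rw [if_neg (fun h => hu ⟨t, h⟩), mul_zero]

lemma coeff_linear_pow (c : Fin 5 → F) (i : ℕ) (k : Fin 5 →₀ ℕ) :
    ∃ n : ℕ, coeff k ((∑ t : Fin 5, C (c t) * X t) ^ i) = n • ∏ t : Fin 5, c t ^ k t := by
  classical
  induction i generalizing k with
  | zero =>
    by_cases hk : k = 0
    · subst hk; exact ⟨1, by simp⟩
    · refine ⟨0, ?_⟩
      simp [coeff_one, Ne.symm hk, hk]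
  | succ n ih =>
    rw [pow_succ']
    choose N hN using coeff_linear c
    choose M hM using ih
    refine ⟨∑ x ∈ Finset.HasAntidiagonal.antidiagonal k, N x.1 * M x.2, ?_⟩
    rw [MvPolynomial.coeff_mul, Finset.sum_smul]
    apply Finset.sum_congr rfl
    intro x hx
    rw [hN, hM, smul_mul_smul_comm, ← Finset.prod_mul_distrib]
    congr 1
    apply Finset.prod_congr rfl
    intro t _
    rw [Finset.HasAntidiagonal.mem_antidiagonal] at hx
    rw [← pow_add, ← Finsupp.add_apply, hx]

/-- genericity transfer: the natural number is independent of the coefficients. -/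
lemma coeff_linear_pow_univ (F : Type*) [CommRing F] (i : ℕ) (k : Fin 5 →₀ ℕ) :
    ∃ n : ℕ, ∀ c : Fin 5 → F,
      coeff k ((∑ t : Fin 5, C (c t) * X t) ^ i) = n • ∏ t : Fin 5, c t ^ k t := by
  obtain ⟨n, hn⟩ :=
    coeff_linear_pow (fun t => (X t : MvPolynomial (Fin 5) F)) i k
  refine ⟨n, fun c => ?_⟩
  have key : (∑ t : Fin 5, C (c t) * X t : MvPolynomial (Fin 5) F)
      = map ((aeval c : MvPolynomial (Fin 5) F →ₐ[F] F) : MvPolynomial (Fin 5) F →+* F)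
          (∑ t : Fin 5, C (X t) * X t) := by
    rw [map_sum]
    simp
  rw [key, ← map_pow, MvPolynomial.coeff_map, hn]
  simp [map_nsmul, map_prod, map_pow]

end Helpers

section SumLemmas

lemma sum_cast_pow_eq_zero (p : ℕ) [Fact p.Prime] (F : Type*) [Field F] [CharP F p]
    (k : ℕ) (hk : k < p - 1) : ∑ j ∈ Finset.range p, ((j : F)) ^ k = 0 := by
  have h1 : ∑ j ∈ Finset.range p, ((j : ZMod p)) ^ k = ∑ x : ZMod p, x ^ k := by
    refine Finset.sum_nbij' (fun j => ((j : ZMod p))) (fun x => x.val) ?_ ?_ ?_ ?_ ?_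
    · intro j hj; exact Finset.mem_univ _
    · intro x hx; exact Finset.mem_range.mpr (ZMod.val_lt x)
    · intro j hj; exact ZMod.val_cast_of_lt (Finset.mem_range.mp hj)
    · intro x hx; simp [ZMod.natCast_val, ZMod.cast_id]
    · intro j hj; rfl
  have h2 : ∑ x : ZMod p, x ^ k = 0 := by
    apply FiniteField.sum_pow_lt_card_sub_one
    rwa [ZMod.card]
  calc ∑ j ∈ Finset.range p, ((j:F))^k
      = ∑ j ∈ Finset.range p, (ZMod.castHom (dvd_refl p) F) (((j : ZMod p))^k) := by
        simp [map_natCast]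
    _ = (ZMod.castHom (dvd_refl p) F) (∑ j ∈ Finset.range p, ((j : ZMod p))^k) := by
        rw [map_sum]
    _ = 0 := by rw [h1, h2, map_zero]

lemma sum_poly_eval_eq_zero (p : ℕ) [Fact p.Prime] (F : Type*) [Field F] [CharP F p]
    (q : Polynomial F) (hq : q.natDegree < p - 1) :
    ∑ j ∈ Finset.range p, q.eval ((j : F)) = 0 := by
  have he : ∀ j : ℕ, q.eval ((j:F)) =
      ∑ k ∈ Finset.range (q.natDegree + 1), q.coeff k * (j:F) ^ k := fun j =>
    Polynomial.eval_eq_sum_range _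
  simp only [he]
  rw [Finset.sum_comm]
  apply Finset.sum_eq_zero
  intro k hk
  have hk' : k < p - 1 :=
    lt_of_le_of_lt (Nat.lt_succ_iff.mp (Finset.mem_range.mp hk)) hq
  rw [← Finset.mul_sum, sum_cast_pow_eq_zero p F k hk', mul_zero]

lemma nat_choose_two (j : ℕ) : 2 * j.choose 2 = (j - 1) * j := by
  have h := Nat.descFactorial_eq_factorial_mul_choose j 2
  simp [Nat.descFactorial_succ, Nat.descFactorial_zero, Nat.factorial] at h
  omega

lemma nat_choose_three (j : ℕ) : 6 * j.choose 3 = (j - 2) * ((j - 1) * j) := by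
  have h := Nat.descFactorial_eq_factorial_mul_choose j 3
  simp [Nat.descFactorial_succ, Nat.descFactorial_zero, Nat.factorial] at h
  omega

lemma cast_choose_two (F : Type*) [Field F] (j : ℕ) :
    (2 : F) * (j.choose 2 : F) = (j : F) * ((j:F) - 1) := by
  cases j with
  | zero => simp
  | succ k =>
    calc (2:F) * ((k+1).choose 2 : F) = ((2 * (k+1).choose 2 : ℕ) : F) := by push_cast; ring
      _ = ((k * (k+1) : ℕ) : F) := by rw [nat_choose_two]; norm_num
      _ = ((k+1:ℕ) : F) * (((k+1:ℕ):F) - 1) := by push_cast; ring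

lemma cast_choose_three (F : Type*) [Field F] (j : ℕ) :
    (6 : F) * (j.choose 3 : F) = (j : F) * ((j:F) - 1) * ((j:F) - 2) := by
  match j with
  | 0 => simp
  | 1 => rw [show Nat.choose 1 3 = 0 from rfl]; push_cast; ring
  | (k+2) =>
    calc (6:F) * ((k+2).choose 3 : F) = ((6 * (k+2).choose 3 : ℕ) : F) := by push_cast; ring
      _ = ((k * ((k+1) * (k+2)) : ℕ) : F) := by rw [nat_choose_three]; norm_num
      _ = ((k+2:ℕ) : F) * (((k+2:ℕ):F) - 1) * (((k+2:ℕ):F) - 2) := by push_cast; ring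

end SumLemmas

/-- Lemma 5.3(i): if c + 2b + 3a < p - 1, then the monomial X_2^a X_3^b X_4^c X_5^d does
not appear in the transfer Tr(X_5^i) = sum over j in F_p of sigma^j(X_5^i). -/
theorem coeff_transfer_V5 (p : ℕ) [Fact p.Prime] (F : Type*) [Field F] [CharP F p]
    (a b c d i : ℕ) (h : c + 2 * b + 3 * a < p - 1) :
    MvPolynomial.coeff
      (Finsupp.single (1 : Fin 5) a + Finsupp.single 2 b + Finsupp.single 3 c +
        Finsupp.single 4 d)
      (∑ j ∈ Finset.range p, (⇑(sigmaV5 F))^[j] ((X 4 : MvPolynomial (Fin 5) F) ^ i))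
      = 0 := by
  classical
  set m : Fin 5 →₀ ℕ := Finsupp.single (1 : Fin 5) a + Finsupp.single 2 b +
    Finsupp.single 3 c + Finsupp.single 4 d with hm
  have hm0 : m 0 = 0 := by simp [hm, Finsupp.single_apply]
  have hm1 : m 1 = a := by simp [hm, Finsupp.single_apply]
  have hm2 : m 2 = b := by simp [hm, Finsupp.single_apply]
  have hm3 : m 3 = c := by simp [hm, Finsupp.single_apply]
  have hm4 : m 4 = d := by simp [hm, Finsupp.single_apply]
  obtain ⟨n, hn⟩ := coeff_linear_pow_univ F i m
  -- the coefficient functions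
  set cf : ℕ → Fin 5 → F := fun j =>
    ![(j.choose 4 : F), (j.choose 3 : F), (j.choose 2 : F), (j.choose 1 : F), 1] with hcf
  have hiter : ∀ j : ℕ, (⇑(sigmaV5 F))^[j] ((X 4 : MvPolynomial (Fin 5) F) ^ i)
      = (∑ t : Fin 5, C (cf j t) * X t) ^ i := by
    intro j
    rw [iterate_map_pow]
    congr 1
    rw [sigma_iter_X4, Fin.sum_univ_five]
    simp only [hcf, Matrix.cons_val_zero, Matrix.cons_val_one, Matrix.head_cons,
      Matrix.cons_val_two, Matrix.tail_cons, Matrix.cons_val_three, Matrix.cons_val_four]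
    rw [← smul_eq_C_mul, ← smul_eq_C_mul, ← smul_eq_C_mul, ← smul_eq_C_mul, ← smul_eq_C_mul]
    rw [Nat.cast_smul_eq_nsmul, Nat.cast_smul_eq_nsmul, Nat.cast_smul_eq_nsmul,
      Nat.cast_smul_eq_nsmul, one_smul]
    abel
  -- rewrite the coefficient of the sum
  rw [MvPolynomial.coeff_sum]
  have hterm : ∀ j : ℕ,
      MvPolynomial.coeff m ((⇑(sigmaV5 F))^[j] ((X 4 : MvPolynomial (Fin 5) F) ^ i))
      = n • ((j.choose 3 : F) ^ a * ((j.choose 2 : F)) ^ b * ((j : F)) ^ c) := by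
    intro j
    rw [hiter j, hn (cf j), Fin.prod_univ_five]
    simp only [hcf, Matrix.cons_val_zero, Matrix.cons_val_one, Matrix.head_cons,
      Matrix.cons_val_two, Matrix.tail_cons, Matrix.cons_val_three, Matrix.cons_val_four]
    rw [hm0, hm1, hm2, hm3, hm4]
    simp [Nat.choose_one_right]
  simp only [hterm]
  rw [← Finset.smul_sum]
  -- reduce to the scalar sum being zero
  have hS : ∑ j ∈ Finset.range p,
      ((j.choose 3 : F) ^ a * ((j.choose 2 : F)) ^ b * ((j : F)) ^ c) = 0 := by
    have hu : ((6:F) ^ a * (2:F) ^ b) ≠ 0 := by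
      have h2 : b ≠ 0 → (2:F) ≠ 0 := by
        intro hb h0
        have : (p : ℕ) ∣ 2 := (CharP.cast_eq_zero_iff F p 2).mp (by exact_mod_cast h0)
        have hp2 : p ≤ 2 := Nat.le_of_dvd (by norm_num) this
        omega
      have h6 : a ≠ 0 → (6:F) ≠ 0 := by
        intro ha h0
        have hdvd : (p : ℕ) ∣ 6 := (CharP.cast_eq_zero_iff F p 6).mp (by exact_mod_cast h0)
        have hp6 : p ≤ 6 := Nat.le_of_dvd (by norm_num) hdvd
        have hp5 : 5 ≤ p := by omega
        interval_cases p
        · norm_num at hdvd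
        · have := (Fact.out : Nat.Prime 6)
          norm_num at this
      rcases Nat.eq_zero_or_pos a with ha | ha <;> rcases Nat.eq_zero_or_pos b with hb | hb
      · simp [ha, hb]
      · simp only [ha, pow_zero, one_mul]
        exact pow_ne_zero _ (h2 (by omega))
      · simp only [hb, pow_zero, mul_one]
        exact pow_ne_zero _ (h6 (by omega))
      · exact mul_ne_zero (pow_ne_zero _ (h6 (by omega))) (pow_ne_zero _ (h2 (by omega)))
    set q : Polynomial F :=
      (Polynomial.X * (Polynomial.X - 1) * (Polynomial.X - 2)) ^ a *
      (Polynomial.X * (Polynomial.X - 1)) ^ b * Polynomial.X ^ c with hq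
    have hqe : ∀ j : ℕ,
        (6:F) ^ a * (2:F) ^ b * ((j.choose 3 : F) ^ a * ((j.choose 2 : F)) ^ b * ((j : F)) ^ c)
        = q.eval ((j:F)) := by
      intro j
      rw [hq]
      simp only [Polynomial.eval_mul, Polynomial.eval_pow, Polynomial.eval_sub,
        Polynomial.eval_X, Polynomial.eval_one, Polynomial.eval_ofNat]
      rw [← cast_choose_three F j, ← cast_choose_two F j]
      ring
    have key : (6:F) ^ a * (2:F) ^ b *
        (∑ j ∈ Finset.range p,
          ((j.choose 3 : F) ^ a * ((j.choose 2 : F)) ^ b * ((j : F)) ^ c)) = 0 := by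
      rw [Finset.mul_sum]
      calc ∑ j ∈ Finset.range p,
            (6:F) ^ a * (2:F) ^ b * ((j.choose 3 : F) ^ a * ((j.choose 2 : F)) ^ b * ((j : F)) ^ c)
          = ∑ j ∈ Finset.range p, q.eval ((j:F)) := by
            exact Finset.sum_congr rfl fun j _ => hqe j
        _ = 0 := by
            apply sum_poly_eval_eq_zero p F q
            have d1 : (Polynomial.X - 1 : Polynomial F).natDegree ≤ 1 :=
              le_trans (Polynomial.natDegree_sub_le _ _) (by simp)
            have d2 : (Polynomial.X - 2 : Polynomial F).natDegree ≤ 1 :=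
              le_trans (Polynomial.natDegree_sub_le _ _) (by simp)
            have dA : (Polynomial.X * (Polynomial.X - 1) * (Polynomial.X - 2) :
                Polynomial F).natDegree ≤ 3 := by
              refine le_trans (Polynomial.natDegree_mul_le) ?_
              refine le_trans (add_le_add (le_trans (Polynomial.natDegree_mul_le)
                (add_le_add Polynomial.natDegree_X_le d1)) d2) (by norm_num)
            have dB : (Polynomial.X * (Polynomial.X - 1) : Polynomial F).natDegree ≤ 2 := by
              refine le_trans (Polynomial.natDegree_mul_le) ?_
              exact le_trans (add_le_add Polynomial.natDegree_X_le d1) (by norm_num)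
            have hdeg : q.natDegree ≤ 3 * a + 2 * b + c := by
              rw [hq]
              refine le_trans (Polynomial.natDegree_mul_le) ?_
              refine le_trans (add_le_add (le_trans (Polynomial.natDegree_mul_le)
                (add_le_add (le_trans (Polynomial.natDegree_pow_le)
                  (by exact Nat.mul_le_mul_left a dA))
                  (le_trans (Polynomial.natDegree_pow_le)
                    (by exact Nat.mul_le_mul_left b dB))))
                (Polynomial.natDegree_X_pow_le c)) ?_
              omega
            omega
    rcases mul_eq_zero.mp key with h' | h'
    · exact absurd h' hu
    · exact h'
  rw [hS, smul_zero]
end
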